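/- arXiv:1105.0178 — 6 statements merged into one kernel-verified Lean document; each statement's English description precedes it below -/
import Mathlib

section
/- For every positive integer n, ∑_{k=1}^{n} k²·H_{n+k} = (n(n+1)(2n+1)/6)·(2H_{2n} − H_n) − n(n+1)(10n−1)/36. -/
def harmonic' (n : ℕ) : ℚ := ∑ j ∈ Finset.Icc 1 n, (1 / j : ℚ)

lemma harmonic'_succ (m : ℕ) : harmonic' (m + 1) = harmonic' m + 1 / (m + 1) := by
  unfold harmonic'
  rw [Finset.sum_Icc_succ_top (Nat.le_add_left 1 m)]
  push_cast
  ring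

lemma harmonic'_diff (a b : ℕ) (h : a ≤ b) :
    harmonic' b = harmonic' a + ∑ j ∈ Finset.Ioc a b, (1 / j : ℚ) := by
  unfold harmonic'
  have h0 : ∀ m : ℕ, Finset.Icc 1 m = Finset.Ioc 0 m := fun m => by
    rw [← Finset.Icc_add_one_left_eq_Ioc, zero_add]
  rw [h0, h0, ← Finset.sum_Ioc_consecutive _ (Nat.zero_le a) h]

lemma sum_id (n : ℕ) : ∑ k ∈ Finset.Icc 1 n, (k : ℚ) = n * (n + 1) / 2 := by
  induction n with
  | zero => simp
  | succ m ih =>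
    rw [Finset.sum_Icc_succ_top (by omega)]
    push_cast
    rw [ih]
    ring

lemma sum_inv (n : ℕ) :
    ∑ k ∈ Finset.Icc 1 n, (1 : ℚ) / ((n : ℚ) + 1 + k)
      = harmonic' (2 * n + 1) - harmonic' (n + 1) := by
  rw [harmonic'_diff (n + 1) (2 * n + 1) (by omega)]
  have hmap : Finset.Ioc (n + 1) (2 * n + 1)
      = (Finset.Icc 1 n).map (addLeftEmbedding (n + 1)) := by
    rw [Finset.map_add_left_Icc, ← Finset.Icc_add_one_left_eq_Ioc]
    congr 1 <;> omega
  rw [hmap, Finset.sum_map]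
  simp only [addLeftEmbedding_apply]
  rw [add_sub_cancel_left]
  apply Finset.sum_congr rfl
  intro k _
  push_cast
  ring

lemma sumA (n : ℕ) :
    ∑ k ∈ Finset.Icc 1 n, (k : ℚ) ^ 2 * (1 / ((n : ℚ) + 1 + k))
      = -((n : ℚ) * (n + 1)) / 2
        + ((n : ℚ) + 1) ^ 2 * (harmonic' (2 * n + 1) - harmonic' (n + 1)) := by
  have step : ∀ k ∈ Finset.Icc 1 n,
      (k : ℚ) ^ 2 * (1 / ((n : ℚ) + 1 + k))
        = ((k : ℚ) - ((n : ℚ) + 1)) + ((n : ℚ) + 1) ^ 2 * (1 / ((n : ℚ) + 1 + k)) := by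
    intro k hk
    have hk1 : 1 ≤ k := (Finset.mem_Icc.mp hk).1
    have hne : (n : ℚ) + 1 + k ≠ 0 := by positivity
    field_simp
    ring
  rw [Finset.sum_congr rfl step, Finset.sum_add_distrib, Finset.sum_sub_distrib,
    ← Finset.mul_sum, sum_id, sum_inv, Finset.sum_const, Nat.card_Icc]
  simp only [nsmul_eq_mul]
  push_cast [Nat.add_sub_cancel]
  ring

theorem stmt_5 (n : ℕ) (hn : 0 < n) :
    ∑ k ∈ Finset.Icc 1 n, (k : ℚ) ^ 2 * harmonic' (n + k)
      = ((n : ℚ) * (n + 1) * (2 * n + 1) / 6) * (2 * harmonic' (2 * n) - harmonic' n)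
        - n * (n + 1) * (10 * n - 1) / 36 := by
  clear hn
  induction n with
  | zero => simp [harmonic']
  | succ n ih =>
    rw [Finset.sum_Icc_succ_top (by omega : 1 ≤ n + 1),
      show n + 1 + (n + 1) = 2 * (n + 1) from by omega]
    have hsplit : ∀ k ∈ Finset.Icc 1 n,
        (k : ℚ) ^ 2 * harmonic' (n + 1 + k)
          = (k : ℚ) ^ 2 * harmonic' (n + k)
            + (k : ℚ) ^ 2 * (1 / ((n : ℚ) + 1 + k)) := by
      intro k hk
      have : n + 1 + k = (n + k) + 1 := by omega
      rw [this, harmonic'_succ]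
      push_cast
      ring
    rw [Finset.sum_congr rfl hsplit, Finset.sum_add_distrib, ih, sumA]
    have h1 : harmonic' (2 * (n + 1)) = harmonic' (2 * n) + 1 / (2 * n + 1) + 1 / (2 * n + 2) := by
      have e : 2 * (n + 1) = (2 * n + 1) + 1 := by omega
      rw [e, harmonic'_succ, harmonic'_succ]
      push_cast
      ring
    have h2 : harmonic' (2 * n + 1) = harmonic' (2 * n) + 1 / (2 * n + 1) := by
      rw [harmonic'_succ]
      push_cast
      ring
    have h3 : harmonic' (n + 1) = harmonic' n + 1 / (n + 1) := by
      rw [harmonic'_succ]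
    rw [h1, h2, h3]
    have hn1 : (n : ℚ) + 1 ≠ 0 := by positivity
    have hn2 : 2 * (n : ℚ) + 1 ≠ 0 := by positivity
    have hn3 : 2 * (n : ℚ) + 2 ≠ 0 := by positivity
    push_cast
    field_simp
    ring
end

section
/- For every nonnegative integer n, ∑_{k=0}^{n} (1 + 3(n − 2k)·H_k)·C(n,k)³ = (−1)^n. -/
namespace Stmt12Aux

/-- The summand. -/
def Fq (n k : ℕ) : ℚ :=
  (1 + 3 * ((n : ℚ) - 2 * k) * harmonic' k) * (Nat.choose n k : ℚ) ^ 3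

/-- Rational part of the telescoping certificate. -/
def Xp (n k : ℚ) : ℚ :=
  -2*k^6 + 6*(2*n+3)*k^5 - 3*(9*n^2+28*n+21)*k^4
    + 2*(n+2)*(14*n^2+39*n+26)*k^3 - 6*(n+1)*(2*n+3)*(n+2)^2*k^2

/-- Harmonic part of the telescoping certificate. -/
def Yp (n k : ℚ) : ℚ :=
  3*k^3*(k^4 - (5*n+8)*k^3 + 3*(3*n+4)*(n+2)*k^2
    - (n+2)*(8*n^2+24*n+17)*k + 2*(n+1)*(2*n+3)*(n+2)^2)

def Wq (n k : ℕ) : ℚ :=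
  (Xp (n : ℚ) (k : ℚ) + Yp (n : ℚ) (k : ℚ) * harmonic' k) * (Nat.choose (n+2) k : ℚ) ^ 3

lemma harmonic_succ (k : ℕ) : harmonic' (k+1) = harmonic' k + 1/((k:ℚ)+1) := by
  unfold harmonic'
  rw [Finset.sum_Icc_succ_top (Nat.le_add_left 1 k)]
  push_cast
  ring

/-- (n+1-k) * C(n+1,k) = (n+1) * C(n,k) over ℚ, valid for all n k. -/
lemma aux1 (n k : ℕ) :
    ((n:ℚ) + 1 - k) * ((n+1).choose k : ℚ) = ((n:ℚ) + 1) * (n.choose k : ℚ) := by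
  rcases le_or_gt k (n+1) with h | h
  · have hnat := Nat.choose_mul_succ_eq n k
    have := congrArg (fun x : ℕ => (x : ℚ)) hnat
    simp only [Nat.cast_mul] at this
    rw [Nat.cast_sub h] at this
    push_cast at this ⊢
    linarith
  · have h1 : n.choose k = 0 := Nat.choose_eq_zero_of_lt (by omega)
    have h2 : (n+1).choose k = 0 := Nat.choose_eq_zero_of_lt (by omega)
    simp [h1, h2]

/-- (k+1) * C(m, k+1) = (m-k) * C(m,k) over ℚ, valid for all m k. -/
lemma aux2 (m k : ℕ) :
    ((k:ℚ) + 1) * (m.choose (k+1) : ℚ) = ((m:ℚ) - k) * (m.choose k : ℚ) := by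
  rcases le_or_gt k m with h | h
  · have hnat := Nat.choose_succ_right_eq m k
    have := congrArg (fun x : ℕ => (x : ℚ)) hnat
    simp only [Nat.cast_mul] at this
    rw [Nat.cast_sub h] at this
    push_cast at this ⊢
    linarith
  · have h1 : m.choose k = 0 := Nat.choose_eq_zero_of_lt h
    have h2 : m.choose (k+1) = 0 := Nat.choose_eq_zero_of_lt (by omega)
    simp [h1, h2]

lemma step (n k : ℕ) :
    ((n:ℚ)+1)^3*((n:ℚ)+2)^3 * Fq n k
      + (2*(n:ℚ)+3)*((n:ℚ)+1)^2*((n:ℚ)+2)^3 * Fq (n+1) k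
      + ((n:ℚ)+1)^2*((n:ℚ)+2)^4 * Fq (n+2) k
    = Wq n (k+1) - Wq n k := by
  have hn1 : ((n:ℚ) + 1) ≠ 0 := by positivity
  have hn2 : ((n:ℚ) + 2) ≠ 0 := by positivity
  have hk1 : ((k:ℚ) + 1) ≠ 0 := by positivity
  set c : ℚ := ((n+2).choose k : ℚ) with hc
  set h : ℚ := harmonic' k with hh
  -- relation for C(n+2, k+1)
  have e1 : ((n+2).choose (k+1) : ℚ) = ((n:ℚ) + 2 - k) * c / ((k:ℚ)+1) := by
    rw [eq_div_iff hk1]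
    have := aux2 (n+2) k
    push_cast at this
    linarith
  -- relation for C(n+1, k)
  have e2 : ((n+1).choose k : ℚ) = ((n:ℚ) + 2 - k) * c / ((n:ℚ)+2) := by
    rw [eq_div_iff hn2]
    have := aux1 (n+1) k
    push_cast at this
    linarith
  -- relation for C(n, k)
  have e3 : (n.choose k : ℚ) = ((n:ℚ) + 2 - k) * ((n:ℚ) + 1 - k) * c / (((n:ℚ)+1)*((n:ℚ)+2)) := by
    rw [eq_div_iff (by positivity)]
    have h1 := aux1 n k
    have h2 := aux1 (n+1) k
    push_cast at h1 h2
    nlinarith [h1, h2]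
  unfold Fq Wq Xp Yp
  rw [harmonic_succ, e1, e2, e3]
  push_cast
  field_simp
  ring

lemma W_zero (n : ℕ) : Wq n 0 = 0 := by
  unfold Wq Xp Yp harmonic'
  norm_num

lemma W_top (n : ℕ) : Wq n (n+3) = 0 := by
  unfold Wq
  have : (n+2).choose (n+3) = 0 := Nat.choose_eq_zero_of_lt (by omega)
  rw [this]
  norm_num

lemma sum_key (n : ℕ) :
    ∑ k ∈ Finset.range (n+3),
      (((n:ℚ)+1)^3*((n:ℚ)+2)^3 * Fq n k
        + (2*(n:ℚ)+3)*((n:ℚ)+1)^2*((n:ℚ)+2)^3 * Fq (n+1) k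
        + ((n:ℚ)+1)^2*((n:ℚ)+2)^4 * Fq (n+2) k) = 0 := by
  have : ∀ k ∈ Finset.range (n+3),
      (((n:ℚ)+1)^3*((n:ℚ)+2)^3 * Fq n k
        + (2*(n:ℚ)+3)*((n:ℚ)+1)^2*((n:ℚ)+2)^3 * Fq (n+1) k
        + ((n:ℚ)+1)^2*((n:ℚ)+2)^4 * Fq (n+2) k) = Wq n (k+1) - Wq n k :=
    fun k _ => step n k
  rw [Finset.sum_congr rfl this, Finset.sum_range_sub (fun k => Wq n k) (n+3),
    W_zero, W_top]
  ring

/-- Extend the sum range: terms with k > m vanish. -/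
lemma sum_extend (m j : ℕ) (hj : m + 1 ≤ j) :
    ∑ k ∈ Finset.range j, Fq m k = ∑ k ∈ Finset.range (m+1), Fq m k := by
  symm
  apply Finset.sum_subset (Finset.range_subset_range.2 hj)
  intro k _ hk
  simp only [Finset.mem_range, not_lt] at hk
  unfold Fq
  have : m.choose k = 0 := Nat.choose_eq_zero_of_lt (by omega)
  rw [this]
  norm_num

lemma main_pair (n : ℕ) :
    (∑ k ∈ Finset.range (n+1), Fq n k = (-1:ℚ)^n) ∧
    (∑ k ∈ Finset.range (n+2), Fq (n+1) k = (-1:ℚ)^(n+1)) := by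
  induction n with
  | zero =>
      constructor
      · simp [Fq, harmonic']
      · rw [Finset.sum_range_succ, Finset.sum_range_succ]
        have h1 : harmonic' 1 = 1 := by unfold harmonic'; simp
        simp [Fq, harmonic', h1]
        norm_num
  | succ n ih =>
      obtain ⟨ih1, ih2⟩ := ih
      refine ⟨ih2, ?_⟩
      have key := sum_key n
      rw [show (∑ k ∈ Finset.range (n+3),
          (((n:ℚ)+1)^3*((n:ℚ)+2)^3 * Fq n k
            + (2*(n:ℚ)+3)*((n:ℚ)+1)^2*((n:ℚ)+2)^3 * Fq (n+1) k
            + ((n:ℚ)+1)^2*((n:ℚ)+2)^4 * Fq (n+2) k))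
        = ((n:ℚ)+1)^3*((n:ℚ)+2)^3 * (∑ k ∈ Finset.range (n+3), Fq n k)
            + (2*(n:ℚ)+3)*((n:ℚ)+1)^2*((n:ℚ)+2)^3 * (∑ k ∈ Finset.range (n+3), Fq (n+1) k)
            + ((n:ℚ)+1)^2*((n:ℚ)+2)^4 * (∑ k ∈ Finset.range (n+3), Fq (n+2) k) by
          rw [Finset.mul_sum, Finset.mul_sum, Finset.mul_sum, ← Finset.sum_add_distrib,
            ← Finset.sum_add_distrib]] at key
      rw [sum_extend n (n+3) (by omega), sum_extend (n+1) (n+3) (by omega)] at key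
      rw [ih1, ih2] at key
      have hC : ((n:ℚ)+1)^2*((n:ℚ)+2)^4 ≠ 0 := by positivity
      have hdiff : ((n:ℚ)+1)^2*((n:ℚ)+2)^4 *
          ((∑ k ∈ Finset.range (n+3), Fq (n+2) k) - (-1:ℚ)^n) = 0 := by
        rw [pow_succ] at key
        ring_nf at key ⊢
        linarith
      have := mul_eq_zero.mp hdiff
      rcases this with h | h
      · exact absurd h hC
      · have hs : (∑ k ∈ Finset.range (n+3), Fq (n+2) k) = (-1:ℚ)^n := by linarith [sub_eq_zero.mp h]
        rw [hs]
        rw [pow_succ, pow_succ]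
        ring

end Stmt12Aux

theorem stmt_12 (n : ℕ) :
    ∑ k ∈ Finset.range (n + 1),
        (1 + 3 * ((n : ℚ) - 2 * k) * harmonic' k) * (Nat.choose n k : ℚ) ^ 3
      = (-1 : ℚ) ^ n := by
  exact (Stmt12Aux.main_pair n).1
end

section
/- For every nonnegative integer n, ∑_{k=0}^{n} C(n,k)·F_{3k} = 2^n·F_{2n}. -/
open Finset

lemma pascal_sum (f : ℕ → ℕ) (n : ℕ) :
    ∑ k ∈ range (n+2), (n+1).choose k * f k
      = ∑ k ∈ range (n+1), n.choose k * f k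
        + ∑ k ∈ range (n+1), n.choose k * f (k+1) := by
  rw [Finset.sum_range_succ' _ (n+1)]
  simp only [Nat.choose_succ_succ, add_mul, Finset.sum_add_distrib, Nat.choose_zero_right,
    one_mul]
  have h1 : ∑ k ∈ range (n+1), n.choose (k+1) * f (k+1)
      = ∑ k ∈ range n, n.choose (k+1) * f (k+1) := by
    rw [Finset.sum_range_succ, Nat.choose_succ_self, zero_mul, add_zero]
  have h2 : ∑ k ∈ range (n+1), n.choose k * f k
      = ∑ k ∈ range n, n.choose (k+1) * f (k+1) + f 0 := by
    rw [Finset.sum_range_succ' _ n, Nat.choose_zero_right, one_mul]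
  rw [h1, h2]
  ring

lemma fib3 (m : ℕ) : Nat.fib (m+3) = 2 * Nat.fib (m+1) + Nat.fib m := by
  rw [show m+3 = (m+1)+2 by ring, Nat.fib_add_two, Nat.fib_add_two]
  ring

lemma fib4 (m : ℕ) : Nat.fib (m+4) = 3 * Nat.fib (m+1) + 2 * Nat.fib m := by
  rw [show m+4 = (m+2)+2 by ring, Nat.fib_add_two, Nat.fib_add_two, fib3]
  ring

lemma both (n : ℕ) :
    (∑ k ∈ range (n+1), n.choose k * Nat.fib (3*k) = 2^n * Nat.fib (2*n))
    ∧ (∑ k ∈ range (n+1), n.choose k * Nat.fib (3*k+1) = 2^n * Nat.fib (2*n+1)) := by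
  induction n with
  | zero => simp
  | succ n ih =>
    obtain ⟨h0, h1⟩ := ih
    constructor
    · rw [show n+1+1 = n+2 by ring, pascal_sum]
      have : ∀ k, Nat.fib (3*k+3*1) = 2 * Nat.fib (3*k+1) + Nat.fib (3*k) := by
        intro k; rw [show 3*k+3*1 = 3*k+3 by ring, fib3]
      simp only [mul_add, this, Finset.sum_add_distrib, ← Finset.mul_sum]
      have e1 : ∑ x ∈ range (n+1), n.choose x * (2 * Nat.fib (3*x+1))
          = 2 * (2^n * Nat.fib (2*n+1)) := by
        rw [← h1, Finset.mul_sum]; exact Finset.sum_congr rfl (fun x _ => by ring)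
      rw [h0, e1, show 2*n+2*1 = 2*n+2 by ring, Nat.fib_add_two]
      ring
    · rw [show n+1+1 = n+2 by ring, pascal_sum]
      have : ∀ k, Nat.fib (3*k+3*1+1) = 3 * Nat.fib (3*k+1) + 2 * Nat.fib (3*k) := by
        intro k; rw [show 3*k+3*1+1 = 3*k+4 by ring, fib4]
      simp only [mul_add, this, Finset.sum_add_distrib, ← Finset.mul_sum]
      have e1 : ∑ x ∈ range (n+1), n.choose x * (3 * Nat.fib (3*x+1))
          = 3 * (2^n * Nat.fib (2*n+1)) := by
        rw [← h1, Finset.mul_sum]; exact Finset.sum_congr rfl (fun x _ => by ring)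
      have e2 : ∑ x ∈ range (n+1), n.choose x * (2 * Nat.fib (3*x))
          = 2 * (2^n * Nat.fib (2*n)) := by
        rw [← h0, Finset.mul_sum]; exact Finset.sum_congr rfl (fun x _ => by ring)
      rw [h1, e1, e2, show 2*n+2*1+1 = (2*n+1)+2 by ring, Nat.fib_add_two, Nat.fib_add_two]
      ring

theorem stmt_15 (n : ℕ) :
    ∑ k ∈ Finset.range (n + 1), Nat.choose n k * Nat.fib (3 * k)
      = 2 ^ n * Nat.fib (2 * n) := by
  exact (both n).1
end

section
/- Let k, n, N be nonnegative integers with n ≥ N ≥ n − k. Then ∑_{j=0}^{k} C(k,j)·((k+n−j)!/(k+N−j)!)·D_{k+N−j} = (−1)^n · ∑_{j=0}^{n} (−1)^j·C(n,j)·(j+k)!. -/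
open Finset

noncomputable def E (m : ℕ) : ℚ := ∑ i ∈ range (m + 1), (-1 : ℚ) ^ i / i.factorial

lemma E_succ (m : ℕ) : E (m + 1) = E m + (-1 : ℚ) ^ (m + 1) / (m + 1).factorial := by
  simp [E, Finset.sum_range_succ]

lemma derang_eq (m : ℕ) : (numDerangements m : ℚ) = m.factorial * E m := by
  induction m with
  | zero => simp [E]
  | succ m ih =>
    have h := numDerangements_succ m
    have h2 : (numDerangements (m + 1) : ℚ) = (m + 1) * (numDerangements m : ℚ) - (-1) ^ m := by
      exact_mod_cast congrArg (fun z : ℤ => (z : ℚ)) h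
    rw [h2, ih, E_succ, Nat.factorial_succ]
    have hf : ((m + 1).factorial : ℚ) ≠ 0 := by positivity
    push_cast [Nat.factorial_succ] at hf ⊢
    field_simp
    ring

lemma alt_choose_sum (n : ℕ) (hn : n ≠ 0) :
    ∑ j ∈ range (n + 1), (-1 : ℚ) ^ j * (n.choose j : ℚ) = 0 := by
  have h := Int.alternating_sum_range_choose (n := n)
  rw [if_neg hn] at h
  have : ((∑ i ∈ range (n + 1), (-1 : ℤ) ^ i * (n.choose i) : ℤ) : ℚ) = 0 := by
    rw [h]; norm_num
  push_cast at this
  convert this using 2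

lemma B_eq_one (k : ℕ) : ∑ j ∈ range (k + 1), E (k - j) / (j.factorial : ℚ) = 1 := by
  induction k with
  | zero => simp [E]
  | succ k ih =>
    rw [Finset.sum_range_succ]
    have h1 : ∀ j ∈ range (k + 1), E (k + 1 - j) / (j.factorial : ℚ)
        = E (k - j) / (j.factorial : ℚ)
          + ((-1 : ℚ) ^ (k + 1 - j) / (k + 1 - j).factorial) / j.factorial := by
      intro j hj
      have hj' : j ≤ k := by simpa [Nat.lt_succ_iff] using hj
      have : k + 1 - j = (k - j) + 1 := by omega
      rw [this, E_succ, ← this]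
      ring
    rw [Finset.sum_congr rfl h1, Finset.sum_add_distrib, ih]
    have hsum : ∑ j ∈ range (k + 1 + 1),
        ((-1 : ℚ) ^ (k + 1 - j) / (k + 1 - j).factorial) / j.factorial = 0 := by
      have key : ∀ j ∈ range (k + 1 + 1),
          ((-1 : ℚ) ^ (k + 1 - j) / (k + 1 - j).factorial) / j.factorial
            = ((-1 : ℚ) ^ (k + 1) / (k + 1).factorial) * ((-1 : ℚ) ^ j * ((k+1).choose j : ℚ)) := by
        intro j hj
        have hj' : j ≤ k + 1 := by simpa [Nat.lt_succ_iff] using hj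
        have hch : ((k + 1).choose j : ℚ) = (k+1).factorial / (j.factorial * (k + 1 - j).factorial) := by
          rw [Nat.choose_eq_factorial_div_factorial hj']
          rw [Nat.cast_div]
          · push_cast; ring
          · exact Nat.factorial_mul_factorial_dvd_factorial hj'
          · positivity
        have hsign : (-1 : ℚ) ^ (k + 1 - j) * (-1 : ℚ) ^ j = (-1 : ℚ) ^ (k + 1) := by
          rw [← pow_add]; congr 1; omega
        have hsign' : (-1 : ℚ) ^ (k + 1 - j) = (-1 : ℚ) ^ (k + 1) * (-1 : ℚ) ^ j := by
          have hj2 : (-1 : ℚ) ^ j * (-1 : ℚ) ^ j = 1 := by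
            rw [← pow_add, ← two_mul, pow_mul]; norm_num
          calc (-1 : ℚ) ^ (k + 1 - j) = (-1 : ℚ) ^ (k + 1 - j) * ((-1:ℚ)^j * (-1:ℚ)^j) := by
                rw [hj2, mul_one]
            _ = (-1 : ℚ) ^ (k+1) * (-1:ℚ)^j := by rw [← mul_assoc, hsign]
        rw [hsign', hch]
        have h1 : ((k + 1 - j).factorial : ℚ) ≠ 0 := by positivity
        have h2 : (j.factorial : ℚ) ≠ 0 := by positivity
        field_simp
      rw [Finset.sum_congr rfl key, ← Finset.mul_sum, alt_choose_sum (k+1) (by omega), mul_zero]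
    rw [Finset.sum_range_succ] at hsum
    simp only [Nat.sub_self, pow_zero, Nat.factorial_zero, Nat.cast_one] at hsum ⊢
    have : E 0 = 1 := by simp [E]
    rw [this]
    linarith [hsum]

lemma base_L1 (k : ℕ) :
    ∑ j ∈ range (k + 1), (k.choose j : ℚ) * (numDerangements (k - j) : ℚ)
      = k.factorial := by
  have h : ∀ j ∈ range (k + 1), (k.choose j : ℚ) * (numDerangements (k - j) : ℚ)
      = (k.factorial : ℚ) * (E (k - j) / j.factorial) := by
    intro j hj
    have hj' : j ≤ k := by simpa [Nat.lt_succ_iff] using hj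
    rw [derang_eq]
    have hcf : (k.choose j : ℚ) * ((k - j).factorial : ℚ) * (j.factorial : ℚ)
        = (k.factorial : ℚ) := by
      exact_mod_cast congrArg (fun z : ℕ => (z : ℚ))
        (by rw [mul_right_comm]; exact Nat.choose_mul_factorial_mul_factorial hj')
    have h2 : (j.factorial : ℚ) ≠ 0 := by positivity
    rw [← hcf]
    field_simp
  rw [Finset.sum_congr rfl h, ← Finset.mul_sum, B_eq_one, mul_one]

lemma TR (n k : ℕ) :
    ∑ j ∈ range (k + 1), (k.choose j : ℚ) * (numDerangements (n + k - j) : ℚ)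
      = ∑ i ∈ range (n + 1), (-1 : ℚ) ^ i * (n.choose i : ℚ) * ((n + k - i).factorial : ℚ) := by
  induction n generalizing k with
  | zero => simpa using base_L1 k
  | succ n ih =>
    -- T (n+1) k = T n (k+1) - T n k,  R (n+1) k = R n (k+1) - R n k
    have hT : ∑ j ∈ range (k + 1 + 1), ((k+1).choose j : ℚ) * (numDerangements (n + (k+1) - j) : ℚ)
        = ∑ j ∈ range (k + 1), (k.choose j : ℚ) * (numDerangements (n + 1 + k - j) : ℚ)
          + ∑ j ∈ range (k + 1), (k.choose j : ℚ) * (numDerangements (n + k - j) : ℚ) := by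
      have split : ∀ j ∈ range (k + 1 + 1),
          ((k+1).choose j : ℚ) * (numDerangements (n + (k+1) - j) : ℚ)
          = (k.choose j : ℚ) * (numDerangements (n + (k+1) - j) : ℚ)
            + (if j = 0 then 0 else (k.choose (j-1) : ℚ) * (numDerangements (n + (k+1) - j) : ℚ)) := by
        intro j hj
        cases j with
        | zero => simp
        | succ j => simp [Nat.choose_succ_succ, add_mul]; push_cast; ring
      rw [Finset.sum_congr rfl split, Finset.sum_add_distrib]
      congr 1
      · rw [Finset.sum_range_succ, Nat.choose_succ_self]
        simp only [Nat.cast_zero, zero_mul, add_zero]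
        apply Finset.sum_congr rfl
        intro j hj
        have hj' : j ≤ k := by simpa [Nat.lt_succ_iff] using hj
        have : n + (k + 1) - j = n + 1 + k - j := by omega
        rw [this]
      · rw [Finset.sum_range_succ']
        simp only [Nat.succ_ne_zero, if_false, eq_self_iff_true, if_true, add_zero,
          Nat.succ_sub_one]
        apply Finset.sum_congr rfl
        intro j hj
        have : n + (k + 1) - (j + 1) = n + k - j := by omega
        rw [this]
    have hR : ∑ i ∈ range (n + 1), (-1 : ℚ) ^ i * (n.choose i : ℚ) * ((n + (k+1) - i).factorial : ℚ)
        = ∑ i ∈ range (n + 1 + 1), (-1 : ℚ) ^ i * ((n+1).choose i : ℚ) * ((n + 1 + k - i).factorial : ℚ)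
          + ∑ i ∈ range (n + 1), (-1 : ℚ) ^ i * (n.choose i : ℚ) * ((n + k - i).factorial : ℚ) := by
      have split : ∀ i ∈ range (n + 1 + 1),
          (-1 : ℚ) ^ i * ((n+1).choose i : ℚ) * ((n + 1 + k - i).factorial : ℚ)
          = (-1 : ℚ) ^ i * (n.choose i : ℚ) * ((n + 1 + k - i).factorial : ℚ)
            + (if i = 0 then 0 else (-1 : ℚ) ^ i * (n.choose (i-1) : ℚ) * ((n + 1 + k - i).factorial : ℚ)) := by
        intro i hi
        cases i with
        | zero => simp
        | succ i => simp [Nat.choose_succ_succ]; push_cast; ring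
      rw [Finset.sum_congr rfl split, Finset.sum_add_distrib]
      have e1 : ∑ i ∈ range (n + 1 + 1), (-1 : ℚ) ^ i * (n.choose i : ℚ) * ((n + 1 + k - i).factorial : ℚ)
          = ∑ i ∈ range (n + 1), (-1 : ℚ) ^ i * (n.choose i : ℚ) * ((n + (k+1) - i).factorial : ℚ) := by
        rw [Finset.sum_range_succ, Nat.choose_succ_self]
        simp only [Nat.cast_zero, mul_zero, zero_mul, add_zero]
        apply Finset.sum_congr rfl
        intro i hi
        congr 3
        omega
      have e2 : ∑ i ∈ range (n + 1 + 1),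
          (if i = 0 then 0 else (-1 : ℚ) ^ i * (n.choose (i-1) : ℚ) * ((n + 1 + k - i).factorial : ℚ))
          = - ∑ i ∈ range (n + 1), (-1 : ℚ) ^ i * (n.choose i : ℚ) * ((n + k - i).factorial : ℚ) := by
        rw [Finset.sum_range_succ']
        simp only [Nat.succ_ne_zero, if_false, eq_self_iff_true, if_true, add_zero,
          Nat.succ_sub_one]
        rw [← Finset.sum_neg_distrib]
        apply Finset.sum_congr rfl
        intro i hi
        have : n + 1 + k - (i + 1) = n + k - i := by omega
        rw [this, pow_succ]
        ring
      rw [e1, e2]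
      ring
    calc ∑ j ∈ range (k + 1), (k.choose j : ℚ) * (numDerangements (n + 1 + k - j) : ℚ)
        = ∑ j ∈ range (k + 1 + 1), ((k+1).choose j : ℚ) * (numDerangements (n + (k+1) - j) : ℚ)
          - ∑ j ∈ range (k + 1), (k.choose j : ℚ) * (numDerangements (n + k - j) : ℚ) := by
          rw [hT]; ring
      _ = ∑ i ∈ range (n + 1), (-1 : ℚ) ^ i * (n.choose i : ℚ) * ((n + (k+1) - i).factorial : ℚ)
          - ∑ i ∈ range (n + 1), (-1 : ℚ) ^ i * (n.choose i : ℚ) * ((n + k - i).factorial : ℚ) := by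
          rw [ih (k+1), ih k]
      _ = ∑ i ∈ range (n + 1 + 1), (-1 : ℚ) ^ i * ((n+1).choose i : ℚ) * ((n + 1 + k - i).factorial : ℚ) := by
          rw [hR]; ring
open Finset Polynomial

lemma alt_pascal (f : ℕ → ℚ) (k : ℕ) :
    ∑ j ∈ range (k + 2), (-1 : ℚ) ^ j * ((k+1).choose j : ℚ) * f j
      = ∑ j ∈ range (k + 1), (-1 : ℚ) ^ j * (k.choose j : ℚ) * (f j - f (j + 1)) := by
  have split : ∀ j ∈ range (k + 2),
      (-1 : ℚ) ^ j * ((k+1).choose j : ℚ) * f j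
      = (-1 : ℚ) ^ j * (k.choose j : ℚ) * f j
        + (if j = 0 then 0 else (-1 : ℚ) ^ j * (k.choose (j-1) : ℚ) * f j) := by
    intro j hj
    cases j with
    | zero => simp
    | succ j => simp [Nat.choose_succ_succ]; push_cast; ring
  rw [Finset.sum_congr rfl split, Finset.sum_add_distrib]
  have e1 : ∑ j ∈ range (k + 2), (-1 : ℚ) ^ j * (k.choose j : ℚ) * f j
      = ∑ j ∈ range (k + 1), (-1 : ℚ) ^ j * (k.choose j : ℚ) * f j := by
    rw [Finset.sum_range_succ, Nat.choose_succ_self]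
    simp
  have e2 : ∑ j ∈ range (k + 2), (if j = 0 then 0 else (-1 : ℚ) ^ j * (k.choose (j-1) : ℚ) * f j)
      = ∑ j ∈ range (k + 1), -((-1 : ℚ) ^ j * (k.choose j : ℚ) * f (j + 1)) := by
    rw [Finset.sum_range_succ']
    simp only [Nat.succ_ne_zero, if_false, eq_self_iff_true, if_true, add_zero, Nat.succ_sub_one]
    apply Finset.sum_congr rfl
    intro j hj
    rw [pow_succ]
    ring
  rw [e1, e2, Finset.sum_neg_distrib, ← sub_eq_add_neg, ← Finset.sum_sub_distrib]
  apply Finset.sum_congr rfl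
  intro j hj
  ring

lemma poly_kill (k : ℕ) : ∀ P : ℚ[X], P.natDegree < k →
    ∑ j ∈ range (k + 1), (-1 : ℚ) ^ j * (k.choose j : ℚ) * P.eval (j : ℚ) = 0 := by
  induction k with
  | zero => intro P hP; exact absurd hP (Nat.not_lt_zero _)
  | succ k ih =>
    intro P hP
    rw [alt_pascal (fun j => P.eval (j : ℚ)) k]
    by_cases h0 : P.natDegree = 0
    · obtain ⟨c, rfl⟩ := Polynomial.natDegree_eq_zero.mp h0
      simp
    · set Q : ℚ[X] := P - P.comp (X + 1) with hQ
      have hcomp : ∀ j : ℕ, (P.comp (X + 1)).eval (j : ℚ) = P.eval ((j : ℚ) + 1) := by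
        intro j; simp [Polynomial.eval_comp]
      have heval : ∀ j ∈ range (k + 1),
          (-1 : ℚ) ^ j * (k.choose j : ℚ) * (P.eval (j : ℚ) - P.eval ((j+1 : ℕ) : ℚ))
          = (-1 : ℚ) ^ j * (k.choose j : ℚ) * Q.eval (j : ℚ) := by
        intro j hj
        rw [hQ, Polynomial.eval_sub, hcomp j]
        push_cast
        ring
      rw [Finset.sum_congr rfl heval]
      apply ih
      -- natDegree Q < k
      have hP1 : P ≠ 0 := fun h => h0 (by simp [h])
      have hXd : (X + 1 : ℚ[X]).natDegree = 1 := by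
        simpa using Polynomial.natDegree_X_add_C (1 : ℚ)
      have hdc : (P.comp (X + 1)).natDegree = P.natDegree := by
        rw [Polynomial.natDegree_comp, hXd, mul_one]
      have hlc : (P.comp (X + 1)).leadingCoeff = P.leadingCoeff := by
        rw [Polynomial.leadingCoeff_comp (by rw [hXd]; norm_num)]
        have : (X + 1 : ℚ[X]).leadingCoeff = 1 := by
          simpa using Polynomial.leadingCoeff_X_add_C (1 : ℚ)
        rw [this, one_pow, mul_one]
      have hdeg : Q.degree < P.degree := by
        apply Polynomial.degree_sub_lt _ hP1 hlc.symm
        rw [Polynomial.degree_eq_natDegree hP1, hdc.symm]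
        have : P.comp (X + 1) ≠ 0 := by
          intro h
          rw [h] at hdc
          simp at hdc
          exact h0 hdc.symm
        rw [Polynomial.degree_eq_natDegree this]
      by_cases hQ0 : Q = 0
      · rw [hQ0]; simp; omega
      · have := Polynomial.natDegree_lt_natDegree hQ0 hdeg
        omega

lemma neg_one_pow_sub (s t : ℕ) (h : t ≤ s) : (-1 : ℚ) ^ (s - t) = (-1) ^ s * (-1) ^ t := by
  have h1 : (-1 : ℚ) ^ (s - t) * (-1) ^ t = (-1) ^ s := by
    rw [← pow_add]; congr 1; omega
  have h2 : (-1 : ℚ) ^ t * (-1) ^ t = 1 := by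
    rw [← pow_add, ← two_mul, pow_mul]; norm_num
  calc (-1 : ℚ) ^ (s - t) = (-1 : ℚ) ^ (s - t) * ((-1 : ℚ) ^ t * (-1) ^ t) := by rw [h2, mul_one]
    _ = (-1 : ℚ) ^ s * (-1) ^ t := by rw [← mul_assoc, h1]

lemma fact_ratio (m a : ℕ) :
    ((m + a).factorial : ℚ) = m.factorial * ∏ t ∈ range a, ((m : ℚ) + 1 + t) := by
  induction a with
  | zero => simp
  | succ a ih =>
    have : m + (a + 1) = (m + a) + 1 := by omega
    rw [this, Nat.factorial_succ, Finset.prod_range_succ, ← mul_assoc, ← ih]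
    push_cast
    ring

lemma prod_kill (k a : ℕ) (ha : a < k) (c : ℚ) :
    ∑ j ∈ range (k + 1), (-1 : ℚ) ^ j * (k.choose j : ℚ) * ∏ t ∈ range a, (c + t - j) = 0 := by
  have hdeg : (∏ t ∈ range a, (Polynomial.C (c + t) - Polynomial.X : ℚ[X])).natDegree < k := by
    calc (∏ t ∈ range a, (Polynomial.C (c + t) - Polynomial.X : ℚ[X])).natDegree
        ≤ ∑ t ∈ range a, (Polynomial.C (c + t) - Polynomial.X : ℚ[X]).natDegree :=
          Polynomial.natDegree_prod_le _ _
      _ ≤ ∑ t ∈ range a, 1 := by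
          apply Finset.sum_le_sum
          intro t ht
          calc (Polynomial.C (c + t) - Polynomial.X : ℚ[X]).natDegree
              ≤ max (Polynomial.C (c + t) : ℚ[X]).natDegree (Polynomial.X : ℚ[X]).natDegree :=
                Polynomial.natDegree_sub_le _ _
            _ ≤ 1 := by simp
      _ = a := by simp
      _ < k := ha
  have h := poly_kill k _ hdeg
  rw [← h]
  apply Finset.sum_congr rfl
  intro j hj
  congr 1
  rw [Polynomial.eval_prod]
  apply Finset.prod_congr rfl
  intro t ht
  simp

lemma termE (k n M : ℕ) : ∀ j ∈ range (k + 1),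
    (k.choose j : ℚ) * ((k + n - j).factorial / (k + M - j).factorial : ℚ)
      * (numDerangements (k + M - j) : ℚ)
    = (k.choose j : ℚ) * ((k + n - j).factorial : ℚ) * E (k + M - j) := by
  intro j hj
  rw [derang_eq]
  have h : ((k + M - j).factorial : ℚ) ≠ 0 := by positivity
  field_simp

lemma Lstep (k n N : ℕ) (h1 : N < n) (h2 : n ≤ N + k) :
    ∑ j ∈ range (k + 1), (k.choose j : ℚ) * ((k + n - j).factorial / (k + N - j).factorial : ℚ)
        * (numDerangements (k + N - j) : ℚ)
    = ∑ j ∈ range (k + 1), (k.choose j : ℚ)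
        * ((k + n - j).factorial / (k + (N + 1) - j).factorial : ℚ)
        * (numDerangements (k + (N + 1) - j) : ℚ) := by
  rw [Finset.sum_congr rfl (termE k n N), Finset.sum_congr rfl (termE k n (N + 1))]
  have key : ∀ j ∈ range (k + 1),
      (k.choose j : ℚ) * ((k + n - j).factorial : ℚ) * E (k + (N + 1) - j)
        - (k.choose j : ℚ) * ((k + n - j).factorial : ℚ) * E (k + N - j)
      = (-1 : ℚ) ^ (k + N + 1)
          * ((-1 : ℚ) ^ j * (k.choose j : ℚ)
              * ∏ t ∈ range (n - N - 1), (((k : ℚ) + N + 2) + t - j)) := by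
    intro j hj
    have hj' : j ≤ k := by simpa [Nat.lt_succ_iff] using hj
    have e1 : k + (N + 1) - j = (k + N - j) + 1 := by omega
    have e2 : (k + N - j) + 1 = k + N + 1 - j := by omega
    rw [e1, E_succ, e2]
    have hfac : ((k + n - j).factorial : ℚ)
        = ((k + N + 1 - j).factorial : ℚ)
          * ∏ t ∈ range (n - N - 1), (((k + N + 1 - j : ℕ) : ℚ) + 1 + t) := by
      have e3 : k + n - j = (k + N + 1 - j) + (n - N - 1) := by omega
      rw [e3, fact_ratio]
    have hcast : ((k + N + 1 - j : ℕ) : ℚ) = (k : ℚ) + N + 1 - j := by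
      rw [Nat.cast_sub (by omega)]
      push_cast
      ring
    have hsign : (-1 : ℚ) ^ (k + N + 1 - j) = (-1 : ℚ) ^ (k + N + 1) * (-1 : ℚ) ^ j :=
      neg_one_pow_sub _ _ (by omega)
    have hprod : ∏ t ∈ range (n - N - 1), (((k : ℚ) + N + 1 - j) + 1 + t)
        = ∏ t ∈ range (n - N - 1), (((k : ℚ) + N + 2) + t - j) := by
      apply Finset.prod_congr rfl
      intro t ht
      ring
    have hne : ((k + N + 1 - j).factorial : ℚ) ≠ 0 := by positivity
    rw [hfac, hcast, hsign, hprod]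
    field_simp
    ring
  have hz : ∑ j ∈ range (k + 1),
      ((k.choose j : ℚ) * ((k + n - j).factorial : ℚ) * E (k + (N + 1) - j)
        - (k.choose j : ℚ) * ((k + n - j).factorial : ℚ) * E (k + N - j)) = 0 := by
    rw [Finset.sum_congr rfl key, ← Finset.mul_sum, prod_kill k (n - N - 1) (by omega), mul_zero]
  rw [Finset.sum_sub_distrib] at hz
  linarith [hz]

lemma reflect_sum (n k : ℕ) :
    ∑ i ∈ range (n + 1), (-1 : ℚ) ^ i * (n.choose i : ℚ) * ((n + k - i).factorial : ℚ)
    = (-1 : ℚ) ^ n * ∑ j ∈ range (n + 1),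
        (-1 : ℚ) ^ j * (n.choose j : ℚ) * ((j + k).factorial : ℚ) := by
  rw [← Finset.sum_range_reflect
    (fun i => (-1 : ℚ) ^ i * (n.choose i : ℚ) * ((n + k - i).factorial : ℚ)) (n + 1),
    Finset.mul_sum]
  apply Finset.sum_congr rfl
  intro j hj
  have hj' : j ≤ n := by simpa [Nat.lt_succ_iff] using hj
  simp only [Nat.add_sub_cancel]
  rw [Nat.choose_symm hj']
  have e : n + k - (n - j) = j + k := by omega
  rw [e, neg_one_pow_sub n j hj']
  ring

theorem stmt_17 (k n N : ℕ) (h1 : N ≤ n) (h2 : n ≤ N + k) :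
    ∑ j ∈ Finset.range (k + 1),
        (Nat.choose k j : ℚ) * ((k + n - j).factorial / (k + N - j).factorial : ℚ)
          * (numDerangements (k + N - j) : ℚ)
      = (-1 : ℚ) ^ n * ∑ j ∈ Finset.range (n + 1),
          (-1 : ℚ) ^ j * (Nat.choose n j : ℚ) * ((j + k).factorial : ℚ) := by
  obtain ⟨d, hd⟩ := Nat.exists_eq_add_of_le h1
  subst hd
  clear h1
  induction d generalizing N with
  | zero =>
    simp only [Nat.add_zero]
    have step1 : ∀ j ∈ range (k + 1),
        (k.choose j : ℚ) * ((k + N - j).factorial / (k + N - j).factorial : ℚ)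
          * (numDerangements (k + N - j) : ℚ)
        = (k.choose j : ℚ) * (numDerangements (N + k - j) : ℚ) := by
      intro j hj
      have h : ((k + N - j).factorial : ℚ) ≠ 0 := by positivity
      rw [div_self h, mul_one]
      have e : k + N - j = N + k - j := by omega
      rw [e]
    rw [Finset.sum_congr rfl step1, TR N k, reflect_sum N k]
  | succ d ih =>
    rw [Lstep k (N + (d + 1)) N (by omega) (by omega)]
    have h2' : (N + 1) + d ≤ (N + 1) + k := by omega
    have := ih (N + 1) h2'
    rw [show N + 1 + d = N + (d + 1) by omega] at this
    exact this
end

section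
/- For every nonnegative integer n, ∑_{k=0}^{n} ∑_{j=0}^{k} C(n,k)·C(n+k,k)·C(k,j)³ = ∑_{k=0}^{n} C(n,k)²·C(n+k,k)² (the Apéry–Schmidt–Strehl identity). -/
open Finset

/-- Trinomial revision, valid whenever `c ≤ b`. -/
private lemma trin (a b c : ℕ) (h : c ≤ b) :
    a.choose b * b.choose c = a.choose c * (a - c).choose (b - c) := by
  rcases le_or_gt b a with hba | hba
  · exact Nat.choose_mul h
  · rw [Nat.choose_eq_zero_of_lt hba, Nat.zero_mul]
    rcases le_or_gt c a with hca | hca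
    · rw [Nat.choose_eq_zero_of_lt (by omega : a - c < b - c), Nat.mul_zero]
    · rw [Nat.choose_eq_zero_of_lt hca, Nat.zero_mul]

/-- Vandermonde, range form. -/
private lemma vdm (p q r : ℕ) :
    (p + q).choose r = ∑ i ∈ Finset.range (r + 1), p.choose i * q.choose (r - i) := by
  rw [Nat.add_choose_eq, Finset.Nat.sum_antidiagonal_eq_sum_range_succ_mk]

/-- Vandermonde, reflected range form. -/
private lemma vdm' (p q r : ℕ) :
    (p + q).choose r = ∑ m ∈ Finset.range (r + 1), p.choose (r - m) * q.choose m := by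
  rw [vdm, ← Finset.sum_range_reflect]
  refine Finset.sum_congr rfl fun m hm => ?_
  rw [Finset.mem_range] at hm
  rw [show r + 1 - 1 - m = r - m from by omega, show r - (r - m) = m from by omega]

/-- Shift a range sum when the first `a` terms vanish. -/
private lemma shift (f : ℕ → ℕ) (a N : ℕ) (h0 : ∀ k < a, f k = 0) :
    ∑ k ∈ Finset.range N, f k = ∑ x ∈ Finset.range (N - a), f (a + x) := by
  rw [← Finset.sum_Ico_eq_sum_range]
  rcases le_or_gt a N with h | h
  · rw [Finset.range_eq_Ico]
    symm
    apply Finset.sum_subset (Finset.Ico_subset_Ico (by omega) le_rfl)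
    intro x hx hx'
    simp only [Finset.mem_Ico] at hx hx'
    exact h0 x (by omega)
  · rw [Finset.Ico_eq_empty (by omega), Finset.sum_empty]
    apply Finset.sum_eq_zero
    intro k hk
    rw [Finset.mem_range] at hk
    exact h0 k (by omega)

private lemma lemA' (k a : ℕ) (h : a ≤ k) :
    ∑ j ∈ Finset.range (k + 1), (k.choose j) ^ 2 * (j.choose a * j.choose (k - a))
      = (k.choose a) ^ 3 := by
  set M := min a (k - a) with hM
  rw [← Finset.sum_range_reflect]
  simp only [Nat.add_sub_cancel]
  have key : ∑ x ∈ Finset.range (M + 1),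
      (k.choose (k - x)) ^ 2 * ((k - x).choose a * (k - x).choose (k - a))
      = ∑ x ∈ Finset.range (M + 1),
        (k.choose a) ^ 2 * ((k - a).choose x * a.choose (a - x)) := by
    refine Finset.sum_congr rfl fun x hx => ?_
    rw [Finset.mem_range] at hx
    have hxa : x ≤ a := by omega
    have hxk : x ≤ k - a := by omega
    have e1 : k.choose (k - x) * (k - x).choose a = k.choose a * (k - a).choose x := by
      rw [trin k (k - x) a (by omega)]
      rw [show k - x - a = (k - a) - x from by omega, Nat.choose_symm hxk]
    have e2 : k.choose (k - x) * (k - x).choose (k - a) = k.choose a * a.choose (a - x) := by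
      rw [trin k (k - x) (k - a) (by omega)]
      rw [show k - (k - a) = a from by omega, show k - x - (k - a) = a - x from by omega,
        Nat.choose_symm h]
    calc (k.choose (k - x)) ^ 2 * ((k - x).choose a * (k - x).choose (k - a))
        = (k.choose (k - x) * (k - x).choose a) * (k.choose (k - x) * (k - x).choose (k - a)) := by
          ring
      _ = (k.choose a * (k - a).choose x) * (k.choose a * a.choose (a - x)) := by rw [e1, e2]
      _ = (k.choose a) ^ 2 * ((k - a).choose x * a.choose (a - x)) := by ring
  rw [← Finset.sum_subset (Finset.range_subset_range.2 (by omega : M + 1 ≤ k + 1)) ?_]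
  · rw [key, ← Finset.mul_sum]
    have ext : ∑ x ∈ Finset.range (M + 1), (k - a).choose x * a.choose (a - x)
        = ∑ x ∈ Finset.range (a + 1), (k - a).choose x * a.choose (a - x) := by
      apply Finset.sum_subset (Finset.range_subset_range.2 (by omega))
      intro x hx hx'
      simp only [Finset.mem_range] at hx hx'
      rw [Nat.choose_eq_zero_of_lt (by omega : k - a < x), Nat.zero_mul]
    rw [ext, ← vdm (k - a) a a, show k - a + a = k from by omega]
    ring
  · intro x hx hx'
    simp only [Finset.mem_range] at hx hx'
    rcases (by omega : a < x ∨ k - a < x) with h1 | h1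
    · rw [Nat.choose_eq_zero_of_lt (by omega : k - x < k - a)]
      ring
    · rw [Nat.choose_eq_zero_of_lt (by omega : k - x < a)]
      ring

private lemma lemA (k : ℕ) :
    ∑ j ∈ Finset.range (k + 1), (k.choose j) ^ 3
      = ∑ j ∈ Finset.range (k + 1), (k.choose j) ^ 2 * (2 * j).choose k := by
  symm
  calc ∑ j ∈ Finset.range (k + 1), (k.choose j) ^ 2 * (2 * j).choose k
      = ∑ j ∈ Finset.range (k + 1), ∑ a ∈ Finset.range (k + 1),
          (k.choose j) ^ 2 * (j.choose a * j.choose (k - a)) := by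
        refine Finset.sum_congr rfl fun j hj => ?_
        rw [show 2 * j = j + j from by ring, vdm j j k, Finset.mul_sum]
    _ = ∑ a ∈ Finset.range (k + 1), ∑ j ∈ Finset.range (k + 1),
          (k.choose j) ^ 2 * (j.choose a * j.choose (k - a)) := Finset.sum_comm
    _ = ∑ a ∈ Finset.range (k + 1), (k.choose a) ^ 3 := by
        refine Finset.sum_congr rfl fun a ha => ?_
        rw [Finset.mem_range] at ha
        exact lemA' k a (by omega)

private lemma lemC (n j : ℕ) (h : j ≤ n) :
    ∑ x ∈ Finset.range (n - j + 1), (n - j).choose x * (j.choose x * (n + j + x).choose n)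
      = (n + j).choose (2 * j) * (n + j).choose j := by
  calc ∑ x ∈ Finset.range (n - j + 1), (n - j).choose x * (j.choose x * (n + j + x).choose n)
      = ∑ x ∈ Finset.range (n - j + 1), ∑ m ∈ Finset.range (n + 1),
          (n + j).choose (n - m) * ((n - j).choose x * (j.choose x * x.choose m)) := by
        refine Finset.sum_congr rfl fun x hx => ?_
        rw [vdm' (n + j) x n, Finset.mul_sum, Finset.mul_sum]
        exact Finset.sum_congr rfl fun m hm => by ring
    _ = ∑ m ∈ Finset.range (n + 1), (n + j).choose (n - m) *
          ∑ x ∈ Finset.range (n - j + 1), (n - j).choose x * (j.choose x * x.choose m) := by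
        rw [Finset.sum_comm]
        exact Finset.sum_congr rfl fun m _ => by rw [Finset.mul_sum]
    _ = ∑ m ∈ Finset.range (n + 1), (n + j).choose (n - m) *
          (j.choose m * ∑ t ∈ Finset.range (n - j + 1 - m),
            (n - j).choose (m + t) * (j - m).choose t) := by
        refine Finset.sum_congr rfl fun m _ => ?_
        congr 1
        rw [shift (fun x => (n - j).choose x * (j.choose x * x.choose m)) m (n - j + 1)
          (fun x hx => by simp [Nat.choose_eq_zero_of_lt hx])]
        rw [Finset.mul_sum]
        refine Finset.sum_congr rfl fun t _ => ?_
        have e : j.choose (m + t) * (m + t).choose m = j.choose m * (j - m).choose t := by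
          rw [trin j (m + t) m (Nat.le_add_right m t)]
          congr 2
          omega
        calc (n - j).choose (m + t) * (j.choose (m + t) * (m + t).choose m)
            = (n - j).choose (m + t) * (j.choose m * (j - m).choose t) := by rw [e]
          _ = j.choose m * ((n - j).choose (m + t) * (j - m).choose t) := by ring
    _ = ∑ m ∈ Finset.range (n - j + 1), (n + j).choose j * (j.choose m * n.choose (n - j - m)) := by
        rw [← Finset.sum_subset (Finset.range_subset_range.2 (by omega : n - j + 1 ≤ n + 1)) ?_]
        · refine Finset.sum_congr rfl fun m hm => ?_
          rw [Finset.mem_range] at hm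
          have hmn : m ≤ n - j := by omega
          rcases le_or_gt m j with hmj | hmj
          · have hS : ∑ t ∈ Finset.range (n - j + 1 - m),
                (n - j).choose (m + t) * (j - m).choose t = (n - m).choose (n - j - m) := by
              rw [show n - j + 1 - m = (n - j - m) + 1 from by omega,
                show n - m = (n - j) + (j - m) from by omega, vdm' (n - j) (j - m) (n - j - m)]
              refine Finset.sum_congr rfl fun t ht => ?_
              rw [Finset.mem_range] at ht
              rw [show n - j - m - t = (n - j) - (m + t) from by omega,
                Nat.choose_symm (by omega : m + t ≤ n - j)]
            rw [hS]
            have e1 : (n - m).choose (n - j - m) = (n - m).choose j := by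
              rw [show n - j - m = (n - m) - j from by omega,
                Nat.choose_symm (by omega : j ≤ n - m)]
            rw [e1]
            have e2 : (n + j).choose (n - m) * (n - m).choose j
                = (n + j).choose j * n.choose (n - j - m) := by
              rw [trin (n + j) (n - m) j (by omega)]
              congr 2 <;> omega
            calc (n + j).choose (n - m) * (j.choose m * (n - m).choose j)
                = ((n + j).choose (n - m) * (n - m).choose j) * j.choose m := by ring
              _ = ((n + j).choose j * n.choose (n - j - m)) * j.choose m := by rw [e2]
              _ = (n + j).choose j * (j.choose m * n.choose (n - j - m)) := by ring
          · rw [Nat.choose_eq_zero_of_lt hmj]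
            ring
        · intro m hm hm'
          simp only [Finset.mem_range] at hm hm'
          rw [show n - j + 1 - m = 0 from by omega, Finset.range_zero, Finset.sum_empty,
            Nat.mul_zero, Nat.mul_zero]
    _ = (n + j).choose (2 * j) * (n + j).choose j := by
        rw [← Finset.mul_sum]
        have v : (∑ m ∈ Finset.range (n - j + 1), j.choose m * n.choose (n - j - m))
            = (n + j).choose (2 * j) := by
          rw [← Nat.choose_symm (by omega : 2 * j ≤ n + j),
            show n + j - 2 * j = n - j from by omega, show n + j = j + n from by omega,
            vdm j n (n - j)]
        rw [v]
        ring

private lemma lemB (n j : ℕ) (h : j ≤ n) :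
    ∑ k ∈ Finset.range (n + 1),
        n.choose k * (n + k).choose k * ((k.choose j) ^ 2 * (2 * j).choose k)
      = (n.choose j) ^ 2 * ((n + j).choose j) ^ 2 := by
  rw [shift (fun k => n.choose k * (n + k).choose k * ((k.choose j) ^ 2 * (2 * j).choose k)) j
    (n + 1) (fun k hk => by simp [Nat.choose_eq_zero_of_lt hk])]
  rw [show n + 1 - j = n - j + 1 from by omega]
  calc ∑ x ∈ Finset.range (n - j + 1),
        n.choose (j + x) * (n + (j + x)).choose (j + x)
          * (((j + x).choose j) ^ 2 * (2 * j).choose (j + x))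
      = ∑ x ∈ Finset.range (n - j + 1), (n.choose j * (2 * j).choose j)
          * ((n - j).choose x * (j.choose x * (n + j + x).choose n)) := by
        refine Finset.sum_congr rfl fun x hx => ?_
        have e1 : n.choose (j + x) * (j + x).choose j = n.choose j * (n - j).choose x := by
          rw [trin n (j + x) j (Nat.le_add_right j x)]
          congr 2
          omega
        have e2 : (2 * j).choose (j + x) * (j + x).choose j
            = (2 * j).choose j * j.choose x := by
          rw [trin (2 * j) (j + x) j (Nat.le_add_right j x)]
          congr 2 <;> omega
        have e3 : (n + (j + x)).choose (j + x) = (n + j + x).choose n := by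
          have h1 : n + (j + x) = n + j + x := by ring
          have h2 : j + x = (n + j + x) - n := by omega
          rw [h1, h2, Nat.choose_symm (by omega : n ≤ n + j + x)]
        calc n.choose (j + x) * (n + (j + x)).choose (j + x)
              * (((j + x).choose j) ^ 2 * (2 * j).choose (j + x))
            = (n.choose (j + x) * (j + x).choose j)
              * ((2 * j).choose (j + x) * (j + x).choose j)
              * (n + (j + x)).choose (j + x) := by ring
          _ = (n.choose j * (n - j).choose x) * ((2 * j).choose j * j.choose x)
              * (n + j + x).choose n := by rw [e1, e2, e3]
          _ = (n.choose j * (2 * j).choose j)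
              * ((n - j).choose x * (j.choose x * (n + j + x).choose n)) := by ring
    _ = (n.choose j * (2 * j).choose j) * ((n + j).choose (2 * j) * (n + j).choose j) := by
        rw [← Finset.mul_sum, lemC n j h]
    _ = (n.choose j) ^ 2 * ((n + j).choose j) ^ 2 := by
        have e : (n + j).choose (2 * j) * (2 * j).choose j
            = (n + j).choose j * n.choose j := by
          rw [trin (n + j) (2 * j) j (by omega)]
          congr 2 <;> omega
        calc n.choose j * (2 * j).choose j * ((n + j).choose (2 * j) * (n + j).choose j)
            = ((n + j).choose (2 * j) * (2 * j).choose j)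
              * (n.choose j * (n + j).choose j) := by ring
          _ = ((n + j).choose j * n.choose j) * (n.choose j * (n + j).choose j) := by rw [e]
          _ = (n.choose j) ^ 2 * ((n + j).choose j) ^ 2 := by ring

theorem stmt_18 (n : ℕ) :
    ∑ k ∈ Finset.range (n + 1), ∑ j ∈ Finset.range (k + 1),
        Nat.choose n k * Nat.choose (n + k) k * (Nat.choose k j) ^ 3
      = ∑ k ∈ Finset.range (n + 1),
          (Nat.choose n k) ^ 2 * (Nat.choose (n + k) k) ^ 2 := by
  calc ∑ k ∈ Finset.range (n + 1), ∑ j ∈ Finset.range (k + 1),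
        Nat.choose n k * Nat.choose (n + k) k * (Nat.choose k j) ^ 3
      = ∑ k ∈ Finset.range (n + 1), Nat.choose n k * Nat.choose (n + k) k
          * ∑ j ∈ Finset.range (k + 1), (Nat.choose k j) ^ 3 := by
        exact Finset.sum_congr rfl fun k _ => (Finset.mul_sum _ _ _).symm
    _ = ∑ k ∈ Finset.range (n + 1), ∑ j ∈ Finset.range (n + 1),
          Nat.choose n k * Nat.choose (n + k) k
            * ((Nat.choose k j) ^ 2 * (2 * j).choose k) := by
        refine Finset.sum_congr rfl fun k hk => ?_
        rw [Finset.mem_range] at hk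
        rw [lemA k, Finset.mul_sum]
        apply Finset.sum_subset (Finset.range_subset_range.2 (by omega))
        intro j hj hj'
        simp only [Finset.mem_range] at hj hj'
        rw [Nat.choose_eq_zero_of_lt (by omega : k < j)]
        ring
    _ = ∑ j ∈ Finset.range (n + 1), ∑ k ∈ Finset.range (n + 1),
          Nat.choose n k * Nat.choose (n + k) k
            * ((Nat.choose k j) ^ 2 * (2 * j).choose k) := Finset.sum_comm
    _ = ∑ j ∈ Finset.range (n + 1), (Nat.choose n j) ^ 2 * (Nat.choose (n + j) j) ^ 2 := by
        refine Finset.sum_congr rfl fun j hj => ?_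
        rw [Finset.mem_range] at hj
        exact lemB n j (by omega)
end

section
/- For every nonnegative integer n, ∑_{k=0}^{n} (∑_{j=0}^{k} C(n,j))³ = n·2^{3n−1} + 2^{3n} − 3n·2^{n−2}·C(2n,n) (Calkin's identity). -/
open Finset

/-- Triangle reindexing. -/
lemma tri_aux (H : ℕ → ℕ → ℚ) (n : ℕ) :
    ∑ i ∈ Finset.range n, ∑ j ∈ Finset.range (n - i), H i j
      = ∑ m ∈ Finset.range n, ∑ i ∈ Finset.range (m + 1), H i (m - i) := by
  induction n with
  | zero => simp
  | succ n ih =>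
    rw [Finset.sum_range_succ (f := fun m => ∑ i ∈ Finset.range (m + 1), H i (m - i)), ← ih,
      Finset.sum_range_succ]
    have h1 : ∀ i ∈ Finset.range n, ∑ j ∈ Finset.range (n + 1 - i), H i j
        = ∑ j ∈ Finset.range (n - i), H i j + H i (n - i) := by
      intro i hi
      rw [Finset.mem_range] at hi
      rw [show n + 1 - i = (n - i) + 1 by omega, Finset.sum_range_succ]
    rw [Finset.sum_congr rfl h1, Finset.sum_add_distrib, show n + 1 - n = 1 by omega,
      Finset.sum_range_succ (f := fun i => H i (n - i)) n, Nat.sub_self]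
    simp
    ring

/-- Partial sums of binomial coefficients paired symmetrically give `2 ^ n`. -/
lemma pair_aux (n k : ℕ) (hk : k < n) :
    (∑ j ∈ Finset.range (k + 1), (Nat.choose n j : ℚ))
      + ∑ j ∈ Finset.range (n - k), (Nat.choose n j : ℚ) = 2 ^ n := by
  have h2 : (∑ j ∈ Finset.range (n + 1), (Nat.choose n j : ℚ)) = 2 ^ n := by
    rw [← Nat.cast_sum, Nat.sum_range_choose]; push_cast; ring
  have h3 : ∑ j ∈ Finset.Ico (k + 1) (n + 1), (Nat.choose n j : ℚ)
      = ∑ j ∈ Finset.range (n - k), (Nat.choose n j : ℚ) := by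
    rw [Finset.sum_Ico_eq_sum_range, show n + 1 - (k + 1) = n - k by omega]
    rw [← Finset.sum_range_reflect (fun t => (Nat.choose n (k + 1 + t) : ℚ)) (n - k)]
    apply Finset.sum_congr rfl
    intro t ht
    rw [Finset.mem_range] at ht
    rw [show k + 1 + (n - k - 1 - t) = n - t by omega, Nat.choose_symm (by omega)]
  rw [← h3, ← h2, Finset.range_eq_Ico]
  simpa only [Finset.range_eq_Ico] using Finset.sum_Ico_consecutive (fun j => (Nat.choose n j : ℚ)) (Nat.zero_le (k + 1)) (by omega : k + 1 ≤ n + 1)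

/-- Telescoping identity. -/
lemma tel_aux (n : ℕ) :
    ∑ m ∈ Finset.range n, (((n : ℚ) - m) * (Nat.choose (2 * n) m : ℚ))
      = (n : ℚ) * (Nat.choose (2 * n) n : ℚ) / 2 := by
  have h := Finset.sum_range_sub (fun m => (m : ℚ) * (Nat.choose (2 * n) m : ℚ) / 2) n
  simp only [Nat.cast_zero, zero_mul, zero_div, sub_zero] at h
  rw [← h]
  apply Finset.sum_congr rfl
  intro m hm
  rw [Finset.mem_range] at hm
  have hc := Nat.choose_succ_right_eq (2 * n) m
  qify [show m ≤ 2 * n by omega] at hc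
  push_cast
  linarith

/-- The key cross-term sum. -/
lemma T_aux (n : ℕ) :
    ∑ k ∈ Finset.range n, (∑ i ∈ Finset.range (k + 1), (Nat.choose n i : ℚ))
        * (∑ j ∈ Finset.range (n - k), (Nat.choose n j : ℚ))
      = (n : ℚ) * (Nat.choose (2 * n) n : ℚ) / 2 := by
  set c : ℕ → ℚ := fun i => (Nat.choose n i : ℚ) with hc
  have step1 : ∑ k ∈ Finset.range n, (∑ i ∈ Finset.range (k + 1), c i)
        * (∑ j ∈ Finset.range (n - k), c j)
      = ∑ i ∈ Finset.range n, ∑ j ∈ Finset.range n,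
          ((n - i - j : ℕ) : ℚ) * (c i * c j) := by
    have h1 : ∀ k ∈ Finset.range n,
        (∑ i ∈ Finset.range (k + 1), c i) * (∑ j ∈ Finset.range (n - k), c j)
          = ∑ i ∈ Finset.range n, ∑ j ∈ Finset.range n,
              (if i ≤ k ∧ j + k < n then c i * c j else 0) := by
      intro k hk
      rw [Finset.mem_range] at hk
      have e1 : (∑ i ∈ Finset.range (k + 1), c i)
          = ∑ i ∈ Finset.range n, (if i ≤ k then c i else 0) := by
        rw [← Finset.sum_filter]
        congr 1
        ext i; simp [Finset.mem_filter, Finset.mem_range]; omega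
      have e2 : (∑ j ∈ Finset.range (n - k), c j)
          = ∑ j ∈ Finset.range n, (if j + k < n then c j else 0) := by
        rw [← Finset.sum_filter]
        congr 1
        ext j; simp [Finset.mem_filter, Finset.mem_range]; omega
      rw [e1, e2, Finset.sum_mul_sum]
      apply Finset.sum_congr rfl; intro i _
      apply Finset.sum_congr rfl; intro j _
      rcases Decidable.em (i ≤ k) with h1 | h1 <;> rcases Decidable.em (j + k < n) with h2 | h2 <;>
        simp [h1, h2]
    rw [Finset.sum_congr rfl h1, Finset.sum_comm]
    apply Finset.sum_congr rfl; intro i _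
    rw [Finset.sum_comm]
    apply Finset.sum_congr rfl; intro j _
    rw [← Finset.sum_filter]
    have hf : Finset.filter (fun k => i ≤ k ∧ j + k < n) (Finset.range n)
        = Finset.Ico i (n - j) := by
      ext k; simp [Finset.mem_filter, Finset.mem_range, Finset.mem_Ico]; omega
    rw [hf, Finset.sum_const, Nat.card_Ico, nsmul_eq_mul]
    congr 2
    omega
  rw [step1, ← tel_aux n]
  have vdm : ∀ m : ℕ, (Nat.choose (2 * n) m : ℚ)
      = ∑ i ∈ Finset.range (m + 1), c i * c (m - i) := by
    intro m
    rw [two_mul, Nat.add_choose_eq, Finset.Nat.sum_antidiagonal_eq_sum_range_succ_mk]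
    push_cast; rfl
  have step2 : ∑ m ∈ Finset.range n, (((n : ℚ) - m) * (Nat.choose (2 * n) m : ℚ))
      = ∑ m ∈ Finset.range n, ∑ i ∈ Finset.range (m + 1),
          ((n - i - (m - i) : ℕ) : ℚ) * (c i * c (m - i)) := by
    apply Finset.sum_congr rfl
    intro m hm
    rw [Finset.mem_range] at hm
    rw [vdm m, Finset.mul_sum]
    apply Finset.sum_congr rfl
    intro i hi
    rw [Finset.mem_range] at hi
    rw [show (n - i - (m - i) : ℕ) = n - m by omega]
    rw [Nat.cast_sub hm.le]
  rw [step2, ← tri_aux (fun i j => ((n - i - j : ℕ) : ℚ) * (c i * c j)) n]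
  apply Finset.sum_congr rfl
  intro i hi
  rw [Finset.mem_range] at hi
  symm
  apply Finset.sum_subset
  · apply Finset.range_subset_range.mpr; omega
  · intro j _ hj
    rw [Finset.mem_range] at hj
    have hz : (n - i - j : ℕ) = 0 := by omega
    simp [hz]

theorem stmt_19 (n : ℕ) :
    ∑ k ∈ Finset.range (n + 1), ((∑ j ∈ Finset.range (k + 1), (Nat.choose n j : ℚ))) ^ 3
      = (n : ℚ) * 2 ^ (3 * n) / 2 + 2 ^ (3 * n)
        - 3 * n * 2 ^ n / 4 * (Nat.choose (2 * n) n) := by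
  have hfn : (∑ j ∈ Finset.range (n + 1), (Nat.choose n j : ℚ)) = 2 ^ n := by
    rw [← Nat.cast_sum, Nat.sum_range_choose]; push_cast; ring
  have hpow : (2 : ℚ) ^ (3 * n) = ((2 : ℚ) ^ n) ^ 3 := by rw [mul_comm, pow_mul]
  have key : 2 * ∑ k ∈ Finset.range n,
        (∑ j ∈ Finset.range (k + 1), (Nat.choose n j : ℚ)) ^ 3
      = (n : ℚ) * ((2 : ℚ) ^ n) ^ 3
        - 3 * 2 ^ n * ((n : ℚ) * (Nat.choose (2 * n) n : ℚ) / 2) := by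
    have refl3 : ∑ k ∈ Finset.range n,
          (∑ j ∈ Finset.range ((n - 1 - k) + 1), (Nat.choose n j : ℚ)) ^ 3
        = ∑ k ∈ Finset.range n, (∑ j ∈ Finset.range (k + 1), (Nat.choose n j : ℚ)) ^ 3 :=
      Finset.sum_range_reflect
        (fun k => (∑ j ∈ Finset.range (k + 1), (Nat.choose n j : ℚ)) ^ 3) n
    have expand : ∑ k ∈ Finset.range n,
          ((∑ j ∈ Finset.range (k + 1), (Nat.choose n j : ℚ)) ^ 3
            + (∑ j ∈ Finset.range ((n - 1 - k) + 1), (Nat.choose n j : ℚ)) ^ 3)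
        = ∑ k ∈ Finset.range n, (((2 : ℚ) ^ n) ^ 3
            - 3 * 2 ^ n * ((∑ j ∈ Finset.range (k + 1), (Nat.choose n j : ℚ))
              * (∑ j ∈ Finset.range (n - k), (Nat.choose n j : ℚ)))) := by
      apply Finset.sum_congr rfl
      intro k hk
      rw [Finset.mem_range] at hk
      rw [show (n - 1 - k) + 1 = n - k by omega]
      have hp := pair_aux n k hk
      rw [show (∑ j ∈ Finset.range (n - k), (Nat.choose n j : ℚ))
          = 2 ^ n - ∑ j ∈ Finset.range (k + 1), (Nat.choose n j : ℚ) by linarith]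
      ring
    have h2 : 2 * ∑ k ∈ Finset.range n,
          (∑ j ∈ Finset.range (k + 1), (Nat.choose n j : ℚ)) ^ 3
        = ∑ k ∈ Finset.range n,
          ((∑ j ∈ Finset.range (k + 1), (Nat.choose n j : ℚ)) ^ 3
            + (∑ j ∈ Finset.range ((n - 1 - k) + 1), (Nat.choose n j : ℚ)) ^ 3) := by
      rw [Finset.sum_add_distrib, refl3]; ring
    rw [h2, expand, Finset.sum_sub_distrib, Finset.sum_const, Finset.card_range,
      ← Finset.mul_sum, T_aux n, nsmul_eq_mul]
  rw [Finset.sum_range_succ, hfn, hpow]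
  linarith
end
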